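/- arXiv:2107.04661 — 2 statements merged into one kernel-verified Lean document; each statement's English description precedes it below -/
import Mathlib

section
/- (Theorem 1, Hölder bound on confounding bias.) Under the stated setup, let p, q ∈ [1, ∞] be conjugate exponents (1/p + 1/q = 1). If the function (π_t − π) belongs to L^p(μ) and the function u ↦ m(u) − E[Y|t] belongs to L^q(μ), then |E[Y|t] − E[Y|do(t)]| ≤ ‖π_t − π‖_{L^p(μ)} · ‖m − E[Y|t]‖_{L^q(μ)}, i.e., the confounding bias is bounded by the product of the treatment sensitivity parameter B^p_{UT}(t) = (∫ |π_t(u) − π(u)|^p dμ(u))^{1/p} and the outcome sensitivity parameter B^q_{UY}(t) = (∫ |m(u) − E[Y|t]|^q dμ(u))^{1/q}. -/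
open MeasureTheory
open scoped ENNReal

/-- Theorem 1 (Hölder bound on the confounding bias): for conjugate exponents
`p, q ∈ [1, ∞]`, `|E[Y|t] − E[Y|do(t)]| ≤ ‖π_t − π‖_p · ‖m − E[Y|t]‖_q`. -/
theorem holder_bound_confounding_bias
    {𝒰 : Type*} [MeasurableSpace 𝒰] (μ : Measure 𝒰) [SigmaFinite μ]
    (π πt m : 𝒰 → ℝ)
    (hπ_meas : Measurable π) (hπt_meas : Measurable πt) (hm_meas : Measurable m)
    (hπ_nonneg : ∀ u, 0 ≤ π u) (hπt_nonneg : ∀ u, 0 ≤ πt u)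
    (hπ_one : ∫ u, π u ∂μ = 1) (hπt_one : ∫ u, πt u ∂μ = 1)
    (hmπ : Integrable (fun u => m u * π u) μ)
    (hmπt : Integrable (fun u => m u * πt u) μ)
    (p q : ℝ≥0∞) (hpq : 1 / p + 1 / q = 1)
    (hUT : MemLp (fun u => πt u - π u) p μ)
    (hUY : MemLp (fun u => m u - ∫ v, m v * πt v ∂μ) q μ) :
    |(∫ u, m u * πt u ∂μ) - ∫ u, m u * π u ∂μ|
      ≤ (eLpNorm (fun u => πt u - π u) p μ).toReal
        * (eLpNorm (fun u => m u - ∫ v, m v * πt v ∂μ) q μ).toReal := by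
  set c : ℝ := ∫ v, m v * πt v ∂μ with hc
  have hπ_int : Integrable π μ := by
    by_contra h
    rw [integral_undef h] at hπ_one; norm_num at hπ_one
  have hπt_int : Integrable πt μ := by
    by_contra h
    rw [integral_undef h] at hπt_one; norm_num at hπt_one
  -- the product function
  set h : 𝒰 → ℝ := fun u => (m u - c) * (πt u - π u) with hh
  have hprod : MemLp h 1 μ := by
    have := hUT.smul (φ := fun u => m u - c) hUY
      (p := q) (q := p) (r := 1) (hpqr := ⟨by rw [inv_one, add_comm, ← one_div, ← one_div]; exact hpq⟩)
    simpa [hh, smul_eq_mul, Pi.mul_def] using this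
  have hint : Integrable h μ := (memLp_one_iff_integrable).mp hprod
  -- compute the integral of h
  have hint1 : Integrable (fun u => m u * πt u - m u * π u) μ := hmπt.sub hmπ
  have hint2 : Integrable (fun u => c * πt u - c * π u) μ :=
    (hπt_int.const_mul c).sub (hπ_int.const_mul c)
  have hkey : ∫ u, h u ∂μ = (∫ u, m u * πt u ∂μ) - ∫ u, m u * π u ∂μ := by
    have heq : h = fun u => (m u * πt u - m u * π u) - (c * πt u - c * π u) := by
      funext u; simp [hh]; ring
    rw [heq, integral_sub hint1 hint2, integral_sub hmπt hmπ,
      integral_sub (hπt_int.const_mul c) (hπ_int.const_mul c),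
      integral_const_mul, integral_const_mul, hπ_one, hπt_one]
    ring
  rw [← hkey]
  calc |∫ u, h u ∂μ| ≤ ∫ u, |h u| ∂μ := by
        simpa using norm_integral_le_integral_norm h
    _ = (eLpNorm h 1 μ).toReal := by
        rw [eLpNorm_one_eq_lintegral_enorm,
          ← integral_norm_eq_lintegral_enorm hint.1]
        simp [Real.norm_eq_abs]
    _ ≤ ((eLpNorm (fun u => m u - c) q μ) * (eLpNorm (fun u => πt u - π u) p μ)).toReal := by
        apply ENNReal.toReal_mono
        · exact ENNReal.mul_ne_top hUY.eLpNorm_ne_top hUT.eLpNorm_ne_top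
        · have := eLpNorm_smul_le_mul_eLpNorm (f := fun u => πt u - π u)
            (φ := fun u => m u - c) hUT.1 hUY.1 (p := q) (q := p) (r := 1)
            (hpqr := ⟨by rw [inv_one, add_comm, ← one_div, ← one_div]; exact hpq⟩)
          simpa [hh, smul_eq_mul, Pi.mul_def] using this
    _ = (eLpNorm (fun u => πt u - π u) p μ).toReal
        * (eLpNorm (fun u => m u - c) q μ).toReal := by
        rw [ENNReal.toReal_mul]; ring
end

section
/- (Corollary 2, ATE interval bound.) Under the two-treatment setup, if for each i ∈ {1, 2} the function π_{t_i} − π is μ-integrable and the function u ↦ m_i(u) − E[Y|t_i] is essentially bounded with respect to μ, then the true treatment effect τ_ATE := E[Y|do(t_1)] − E[Y|do(t_2)] satisfies τ_igno − W ≤ τ_ATE ≤ τ_igno + W, where τ_igno := E[Y|t_1] − E[Y|t_2] and the half-width is W := (∫ |π_{t_1} − π| dμ) · essSup_u |m_1(u) − E[Y|t_1]| + (∫ |π_{t_2} − π| dμ) · essSup_u |m_2(u) − E[Y|t_2]|. -/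
open MeasureTheory

open MeasureTheory

lemma key_bound
    {𝒰 : Type*} [MeasurableSpace 𝒰] (μ : Measure 𝒰)
    (π πt m : 𝒰 → ℝ)
    (hπ_meas : Measurable π) (hπt_meas : Measurable πt) (hm_meas : Measurable m)
    (hπ_one : ∫ u, π u ∂μ = 1) (hπt_one : ∫ u, πt u ∂μ = 1)
    (hmπ : Integrable (fun u => m u * π u) μ)
    (hmπt : Integrable (fun u => m u * πt u) μ)
    (hUT : Integrable (fun u => πt u - π u) μ)
    (hUY : ∃ C : ℝ, ∀ᵐ u ∂μ, |m u - ∫ v, m v * πt v ∂μ| ≤ C) :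
    |(∫ u, m u * πt u ∂μ) - ∫ u, m u * π u ∂μ|
      ≤ (∫ u, |πt u - π u| ∂μ) * essSup (fun u => |m u - ∫ v, m v * πt v ∂μ|) μ := by
  obtain ⟨C, hC⟩ := hUY
  set E : ℝ := ∫ v, m v * πt v ∂μ with hE
  set S : ℝ := essSup (fun u => |m u - E|) μ with hS
  have hbdd : Filter.IsBoundedUnder (· ≤ ·) (ae μ) (fun u => |m u - E|) :=
    ⟨C, hC⟩
  have haeS : ∀ᵐ u ∂μ, |m u - E| ≤ S := ae_le_essSup hbdd
  have hπ_int : Integrable π μ := by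
    by_contra h; rw [integral_undef h] at hπ_one; norm_num at hπ_one
  have hπt_int : Integrable πt μ := by
    by_contra h; rw [integral_undef h] at hπt_one; norm_num at hπt_one
  have hzero : ∫ u, πt u - π u ∂μ = 0 := by
    rw [integral_sub hπt_int hπ_int, hπ_one, hπt_one]; ring
  have hint : Integrable (fun u => (m u - E) * (πt u - π u)) μ := by
    have hmeas : AEStronglyMeasurable (fun u => (m u - E) * (πt u - π u)) μ :=
      (((hm_meas.sub measurable_const).mul (hπt_meas.sub hπ_meas))).aestronglyMeasurable
    refine Integrable.mono (hUT.abs.const_mul C) hmeas ?_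
    filter_upwards [hC] with u hu
    simp only [Real.norm_eq_abs, abs_mul, abs_abs]
    calc |m u - E| * |πt u - π u| ≤ C * |πt u - π u| :=
          mul_le_mul_of_nonneg_right hu (abs_nonneg _)
      _ ≤ |C| * |πt u - π u| := mul_le_mul_of_nonneg_right (le_abs_self C) (abs_nonneg _)
  have hId : (∫ u, m u * πt u ∂μ) - ∫ u, m u * π u ∂μ
      = ∫ u, (m u - E) * (πt u - π u) ∂μ := by
    have h1 : (fun u => (m u - E) * (πt u - π u))
        = fun u => (m u * πt u - m u * π u) - E * (πt u - π u) := by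
      funext u; ring
    have hsub : Integrable (fun u => m u * πt u - m u * π u) μ := hmπt.sub hmπ
    rw [h1, integral_sub hsub (hUT.const_mul E),
      integral_sub hmπt hmπ, integral_const_mul, hzero]
    ring
  rw [hId]
  calc |∫ u, (m u - E) * (πt u - π u) ∂μ|
      ≤ ∫ u, |m u - E| * |πt u - π u| ∂μ := by
        simpa [Real.norm_eq_abs, abs_mul] using
          norm_integral_le_integral_norm (fun u => (m u - E) * (πt u - π u)) (μ := μ)
    _ ≤ ∫ u, S * |πt u - π u| ∂μ := by
        refine integral_mono_ae (hint.abs.congr (Filter.Eventually.of_forall fun u => (abs_mul _ _))) (hUT.abs.const_mul S) ?_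
        filter_upwards [haeS] with u hu
        exact mul_le_mul_of_nonneg_right hu (abs_nonneg _)
    _ = (∫ u, |πt u - π u| ∂μ) * S := by rw [integral_const_mul]; ring


/-- Corollary 2 (ATE interval bound): the true treatment effect lies in the
interval `[τ_igno − W, τ_igno + W]`, where
`W = (∫|π_{t₁}−π|)·essSup|m₁−E[Y|t₁]| + (∫|π_{t₂}−π|)·essSup|m₂−E[Y|t₂]|`. -/
theorem ate_interval_bound
    {𝒰 : Type*} [MeasurableSpace 𝒰] (μ : Measure 𝒰) [SigmaFinite μ]
    (π πt₁ πt₂ m₁ m₂ : 𝒰 → ℝ)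
    (hπ_meas : Measurable π) (hπt₁_meas : Measurable πt₁)
    (hπt₂_meas : Measurable πt₂)
    (hm₁_meas : Measurable m₁) (hm₂_meas : Measurable m₂)
    (hπ_nonneg : ∀ u, 0 ≤ π u) (hπt₁_nonneg : ∀ u, 0 ≤ πt₁ u)
    (hπt₂_nonneg : ∀ u, 0 ≤ πt₂ u)
    (hπ_one : ∫ u, π u ∂μ = 1)
    (hπt₁_one : ∫ u, πt₁ u ∂μ = 1) (hπt₂_one : ∫ u, πt₂ u ∂μ = 1)
    (hm₁π : Integrable (fun u => m₁ u * π u) μ)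
    (hm₂π : Integrable (fun u => m₂ u * π u) μ)
    (hm₁πt₁ : Integrable (fun u => m₁ u * πt₁ u) μ)
    (hm₂πt₂ : Integrable (fun u => m₂ u * πt₂ u) μ)
    (hUT₁ : Integrable (fun u => πt₁ u - π u) μ)
    (hUT₂ : Integrable (fun u => πt₂ u - π u) μ)
    (hUY₁ : ∃ C : ℝ, ∀ᵐ u ∂μ, |m₁ u - ∫ v, m₁ v * πt₁ v ∂μ| ≤ C)
    (hUY₂ : ∃ C : ℝ, ∀ᵐ u ∂μ, |m₂ u - ∫ v, m₂ v * πt₂ v ∂μ| ≤ C)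
    (τATE τigno W : ℝ)
    (hτATE : τATE = (∫ u, m₁ u * π u ∂μ) - ∫ u, m₂ u * π u ∂μ)
    (hτigno : τigno = (∫ u, m₁ u * πt₁ u ∂μ) - ∫ u, m₂ u * πt₂ u ∂μ)
    (hW : W = (∫ u, |πt₁ u - π u| ∂μ)
          * essSup (fun u => |m₁ u - ∫ v, m₁ v * πt₁ v ∂μ|) μ
        + (∫ u, |πt₂ u - π u| ∂μ)
          * essSup (fun u => |m₂ u - ∫ v, m₂ v * πt₂ v ∂μ|) μ) :
    τigno - W ≤ τATE ∧ τATE ≤ τigno + W := by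
  have h1 := key_bound μ π πt₁ m₁ hπ_meas hπt₁_meas hm₁_meas hπ_one hπt₁_one hm₁π hm₁πt₁
    hUT₁ hUY₁
  have h2 := key_bound μ π πt₂ m₂ hπ_meas hπt₂_meas hm₂_meas hπ_one hπt₂_one hm₂π hm₂πt₂
    hUT₂ hUY₂
  have key : |τATE - τigno| ≤ W := by
    have : τATE - τigno = -((∫ u, m₁ u * πt₁ u ∂μ) - ∫ u, m₁ u * π u ∂μ)
        + ((∫ u, m₂ u * πt₂ u ∂μ) - ∫ u, m₂ u * π u ∂μ) := by
      rw [hτATE, hτigno]; ring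
    rw [this, hW]
    calc |_ + _| ≤ |-((∫ u, m₁ u * πt₁ u ∂μ) - ∫ u, m₁ u * π u ∂μ)|
          + |(∫ u, m₂ u * πt₂ u ∂μ) - ∫ u, m₂ u * π u ∂μ| := abs_add_le _ _
      _ ≤ _ := by rw [abs_neg]; exact add_le_add h1 h2
  rw [abs_le] at key
  constructor <;> linarith [key.1, key.2]
end
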